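/- Let A and B be admissible linear chains, c a positive integer, and let B' be the admissible chain with e(B') = 1 − e(Bᵀ), i.e. B' = B*. Suppose that A ++ [1] ++ B shrinks to [c, 1]. Then n := r(A) − r(B') ≥ 0 and A = ([c] ++ TWₙ) ∗ B'; moreover, if c = 1 then n = 0. -/

import Mathlib

/-- The tridiagonal matrix associated to a linear chain `A = [a₁,…,a_r]`:
diagonal entries `aᵢ`, entries `-1` immediately above/below the diagonal, `0` elsewhere. -/
def chainMatrix (A : List ℤ) : Matrix (Fin A.length) (Fin A.length) ℤ :=
  fun i j =>
    if i = j then A.get i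
    else if (i : ℕ) + 1 = (j : ℕ) ∨ (j : ℕ) + 1 = (i : ℕ) then -1 else 0

/-- The discriminant `d(A)` of a linear chain: the determinant of `chainMatrix A`
(the `0 × 0` determinant being `1` for the empty list). -/
def disc (A : List ℤ) : ℤ := (chainMatrix A).det

/-- A linear chain is admissible if it is nonempty and all of its entries are `≥ 2`. -/
def Admissible (A : List ℤ) : Prop := A ≠ [] ∧ ∀ a ∈ A, 2 ≤ a

/-- The inductance `e(A) = d(A̅)/d(A)` of a linear chain, as a rational number. -/
def inductance (A : List ℤ) : ℚ := (disc A.tail : ℚ) / (disc A : ℚ)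

/-- `TW n`: the list consisting of `n` copies of the integer `2`. -/
def TW (n : ℕ) : List ℤ := List.replicate n 2

/-- The `∗`-product of two (nonempty) integer lists:
`[a₁,…,a_r] ∗ [b₁,…,b_s] = [a₁,…,a_{r−1}, a_r + b₁ − 1, b₂,…,b_s]`. -/
def sprod (A B : List ℤ) : List ℤ :=
  A.dropLast ++ (A.getLast! + B.head! - 1) :: B.tail

/-- Decrease the first entry of a list by `1` (do nothing to the empty list). -/
def decHead : List ℤ → List ℤ
  | [] => []
  | a :: l => (a - 1) :: l

/-- Decrease the last entry of a list by `1` (do nothing to the empty list). -/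
def decLast (l : List ℤ) : List ℤ := (decHead l.reverse).reverse

/-- A single blow-down of an integer list: remove one entry equal to `1` and decrease
by `1` each entry adjacent to it (one entry if the `1` is at an end of the list,
two entries if it is interior). -/
def BlowdownStep (L L' : List ℤ) : Prop :=
  ∃ P S : List ℤ, L = P ++ 1 :: S ∧ L' = decLast P ++ decHead S

/-- `Shrinks A B`: `B` can be obtained from `A` by a finite sequence of single blow-downs. -/
def Shrinks : List ℤ → List ℤ → Prop := Relation.ReflTransGen BlowdownStep

/-- tail-discriminant: `disc` of the tail, `0` for the empty list. -/
def dtl : List ℤ → ℤ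
  | [] => 0
  | _ :: T => disc T

/-- dropLast-discriminant. -/
def dbl (L : List ℤ) : ℤ := dtl L.reverse

/-- middle-discriminant. -/
def dml (L : List ℤ) : ℤ := dtl L.dropLast

lemma disc_nil : disc [] = 1 := Matrix.det_fin_zero

lemma chainMatrix_succ (a : ℤ) (T : List ℤ) :
    (chainMatrix (a :: T)).submatrix Fin.succ Fin.succ = chainMatrix T := by
  ext i j
  simp only [Matrix.submatrix_apply, chainMatrix]
  by_cases h : i = j
  · subst h
    simp [List.get_cons_succ]
  · have h' : Fin.succ i ≠ Fin.succ j := by simpa [Fin.succ_inj] using h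
    rw [if_neg h', if_neg h]
    have : ((Fin.succ i : Fin (T.length+1)) : ℕ) + 1 = ((Fin.succ j : Fin (T.length+1)) : ℕ) ∨
        ((Fin.succ j : Fin (T.length+1)) : ℕ) + 1 = ((Fin.succ i : Fin (T.length+1)) : ℕ) ↔
        ((i:ℕ) + 1 = (j:ℕ) ∨ (j:ℕ) + 1 = (i:ℕ)) := by
      simp only [Fin.val_succ]; omega
    rw [if_congr this rfl rfl]
lemma disc_singleton (a : ℤ) : disc [a] = a := by
  show (chainMatrix [a] : Matrix (Fin 1) (Fin 1) ℤ).det = a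
  rw [Matrix.det_fin_one]
  simp [chainMatrix]

lemma disc_cons (a : ℤ) (T : List ℤ) : disc (a :: T) = a * disc T - dtl T := by
  cases T with
  | nil => simp [disc_singleton, dtl, disc_nil]
  | cons t T2 =>
    show (chainMatrix (a :: t :: T2) : Matrix (Fin (T2.length + 2)) (Fin (T2.length + 2)) ℤ).det = _
    set M : Matrix (Fin (T2.length + 2)) (Fin (T2.length + 2)) ℤ := chainMatrix (a :: t :: T2) with hM
    rw [Matrix.det_succ_column_zero]
    rw [Fin.sum_univ_succ, Fin.sum_univ_succ]
    have h00 : M 0 0 = a := by simp [hM, chainMatrix]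
    have h10 : M (Fin.succ 0) 0 = -1 := by
      simp [hM, chainMatrix, Fin.ext_iff]
    have hrest : ∀ i : Fin (T2.length), M (Fin.succ (Fin.succ i)) 0 = 0 := by
      intro i
      have h1 : (Fin.succ (Fin.succ i) : Fin (T2.length + 2)) ≠ 0 := Fin.succ_ne_zero _
      have h2 : ¬(((Fin.succ (Fin.succ i) : Fin (T2.length + 2)) : ℕ) + 1 = ((0 : Fin (T2.length+2)) : ℕ) ∨
          ((0 : Fin (T2.length+2)) : ℕ) + 1 = ((Fin.succ (Fin.succ i) : Fin (T2.length + 2)) : ℕ)) := by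
        simp only [Fin.val_succ, Fin.val_zero]; omega
      simp only [hM, chainMatrix, if_neg h1, if_neg h2]
    have hsum0 : (∑ i : Fin (T2.length), (-1 : ℤ) ^ ((Fin.succ (Fin.succ i) : Fin (T2.length+2)) : ℕ) *
        M (Fin.succ (Fin.succ i)) 0 *
        (M.submatrix (Fin.succ (Fin.succ i)).succAbove Fin.succ).det) = 0 := by
      apply Finset.sum_eq_zero
      intro i _
      rw [hrest i]; ring
    rw [hsum0, h00, h10]
    have hminor0 : (M.submatrix (0 : Fin (T2.length+2)).succAbove Fin.succ).det = disc (t :: T2) := by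
      rw [Fin.succAbove_zero]
      rw [show M.submatrix Fin.succ Fin.succ = chainMatrix (t :: T2) from chainMatrix_succ a (t :: T2)]
      rfl
    rw [hminor0]
    have hfact1 : ((Fin.succ 0 : Fin (T2.length+2))).succAbove 0 = 0 := by
      rw [Fin.succAbove_of_castSucc_lt] <;> simp
    have hfact2 : ∀ i : Fin (T2.length),
        ((Fin.succ 0 : Fin (T2.length+2))).succAbove (Fin.succ i) = Fin.succ (Fin.succ i) := by
      intro i
      rw [Fin.succAbove_of_le_castSucc]
      simp [Fin.le_def]
    have hminor1 : (M.submatrix (Fin.succ (0 : Fin (T2.length+1))).succAbove Fin.succ).det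
        = -disc T2 := by
      set N : Matrix (Fin (T2.length + 1)) (Fin (T2.length + 1)) ℤ :=
        M.submatrix (Fin.succ (0 : Fin (T2.length+1))).succAbove Fin.succ with hN
      rw [Matrix.det_succ_row_zero, Fin.sum_univ_succ]
      have hN00 : N 0 0 = -1 := by
        show M (((Fin.succ 0 : Fin (T2.length+2))).succAbove 0) (Fin.succ 0) = -1
        rw [hfact1]
        have h1 : (0 : Fin (T2.length+2)) ≠ Fin.succ 0 := (Fin.succ_ne_zero _).symm
        have h2 : ((0 : Fin (T2.length+2)) : ℕ) + 1 = ((Fin.succ (0:Fin (T2.length+1)) : Fin (T2.length+2)) : ℕ) ∨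
            ((Fin.succ (0:Fin (T2.length+1)) : Fin (T2.length+2)) : ℕ) + 1 = ((0 : Fin (T2.length+2)) : ℕ) := by
          left; simp
        simp only [hM, chainMatrix, if_neg h1, if_pos h2]
      have hNrest : ∀ j : Fin T2.length, N 0 (Fin.succ j) = 0 := by
        intro j
        show M (((Fin.succ 0 : Fin (T2.length+2))).succAbove 0) (Fin.succ (Fin.succ j)) = 0
        rw [hfact1]
        have h1 : (0 : Fin (T2.length+2)) ≠ Fin.succ (Fin.succ j) := (Fin.succ_ne_zero _).symm
        have h2 : ¬(((0 : Fin (T2.length+2)) : ℕ) + 1 = ((Fin.succ (Fin.succ j) : Fin (T2.length+2)) : ℕ) ∨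
            ((Fin.succ (Fin.succ j) : Fin (T2.length+2)) : ℕ) + 1 = ((0 : Fin (T2.length+2)) : ℕ)) := by
          simp only [Fin.val_succ, Fin.val_zero]; omega
        simp only [hM, chainMatrix, if_neg h1, if_neg h2]
      have hzero : (∑ j : Fin T2.length, (-1:ℤ) ^ ((Fin.succ j : Fin (T2.length+1)) : ℕ) *
          N 0 (Fin.succ j) * (N.submatrix Fin.succ (Fin.succ j).succAbove).det) = 0 := by
        apply Finset.sum_eq_zero
        intro j _
        rw [hNrest j]; ring
      rw [hzero, hN00]
      have hmm : (N.submatrix Fin.succ (0 : Fin (T2.length+1)).succAbove).det = disc T2 := by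
        rw [Fin.succAbove_zero, hN, Matrix.submatrix_submatrix]
        have : ((Fin.succ (0 : Fin (T2.length+1))).succAbove ∘ Fin.succ : Fin T2.length → Fin (T2.length+2))
            = Fin.succ ∘ Fin.succ := by
          funext i; exact hfact2 i
        rw [this]
        rw [show (M.submatrix (Fin.succ ∘ Fin.succ) (Fin.succ ∘ Fin.succ) : Matrix (Fin T2.length) (Fin T2.length) ℤ)
            = (M.submatrix Fin.succ Fin.succ).submatrix Fin.succ Fin.succ from (Matrix.submatrix_submatrix _ _ _ _ _).symm]
        rw [show (M.submatrix Fin.succ Fin.succ : Matrix (Fin (T2.length+1)) (Fin (T2.length+1)) ℤ)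
            = chainMatrix (t :: T2) from chainMatrix_succ a (t :: T2)]
        rw [show ((chainMatrix (t :: T2)).submatrix Fin.succ Fin.succ : Matrix (Fin T2.length) (Fin T2.length) ℤ)
            = chainMatrix T2 from chainMatrix_succ t T2]
        rfl
      rw [hmm]
      simp
    rw [hminor1]
    show (-1:ℤ)^((0:Fin (T2.length+2)):ℕ) * a * disc (t :: T2) +
      ((-1:ℤ)^((Fin.succ (0:Fin (T2.length+1)) : Fin (T2.length+2)):ℕ) * (-1) * -disc T2 + 0) = _
    have hd : dtl (t :: T2) = disc T2 := rfl
    rw [hd]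
    simp
    ring
lemma disc_reverse (L : List ℤ) : disc L.reverse = disc L := by
  have h : L.reverse.length = L.length := List.length_reverse
  have key : chainMatrix L.reverse =
      (chainMatrix L).submatrix (fun i => (Fin.cast h i).rev) (fun j => (Fin.cast h j).rev) := by
    ext i j
    simp only [Matrix.submatrix_apply, chainMatrix]
    by_cases hij : i = j
    · subst hij
      rw [if_pos rfl, if_pos rfl]
      have h1 : (i : ℕ) < L.length := by omega
      have h2 : ((Fin.cast h i).rev : ℕ) < L.length := (Fin.cast h i).rev.isLt
      have : L.reverse.get i = L.reverse[(i:ℕ)] := by simp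
      rw [this, List.getElem_reverse]
      congr 1
      show L.length - 1 - (i:ℕ) = ((Fin.cast h i).rev : ℕ)
      simp only [Fin.val_rev, Fin.coe_cast]
      omega
    · have hij' : (Fin.cast h i).rev ≠ (Fin.cast h j).rev := by
        intro hcon
        apply hij
        have := Fin.rev_injective hcon
        exact Fin.ext (by simpa [Fin.ext_iff] using this)
      rw [if_neg hij, if_neg hij']
      have hiL : (i : ℕ) < L.length := by omega
      have hjL : (j : ℕ) < L.length := by omega
      have hne : (i : ℕ) ≠ (j : ℕ) := fun hc => hij (Fin.ext hc)
      have : ((i:ℕ) + 1 = (j:ℕ) ∨ (j:ℕ) + 1 = (i:ℕ)) ↔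
          (((Fin.cast h i).rev : ℕ) + 1 = ((Fin.cast h j).rev : ℕ) ∨
           ((Fin.cast h j).rev : ℕ) + 1 = ((Fin.cast h i).rev : ℕ)) := by
        simp only [Fin.val_rev, Fin.coe_cast]
        omega
      rw [if_congr this rfl rfl]
  show (chainMatrix L.reverse).det = (chainMatrix L).det
  rw [key]
  exact Matrix.det_submatrix_equiv_self ((finCongr h).trans (Fin.revPerm)) (chainMatrix L)
lemma dtl_nil : dtl [] = 0 := rfl
lemma dtl_cons (a : ℤ) (T : List ℤ) : dtl (a :: T) = disc T := rfl

lemma dtl_eq_tail (L : List ℤ) (h : L ≠ []) : dtl L = disc L.tail := by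
  cases L with
  | nil => exact absurd rfl h
  | cons a T => rfl

lemma dbl_nil : dbl [] = 0 := rfl

lemma dbl_concat (Y : List ℤ) (y : ℤ) : dbl (Y ++ [y]) = disc Y := by
  rw [dbl, List.reverse_append]
  simp [dtl, disc_reverse]

lemma dbl_eq_dropLast (L : List ℤ) (h : L ≠ []) : dbl L = disc L.dropLast := by
  induction L using List.reverseRecOn with
  | nil => exact absurd rfl h
  | append_singleton Y y _ =>
    rw [dbl_concat, List.dropLast_concat]

lemma disc_concat (Y : List ℤ) (y : ℤ) : disc (Y ++ [y]) = y * disc Y - dbl Y := by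
  rw [← disc_reverse (Y ++ [y]), List.reverse_append]
  simp only [List.reverse_cons, List.reverse_nil, List.nil_append, List.singleton_append]
  rw [disc_cons, disc_reverse]
  rfl

lemma dbl_cons (x : ℤ) (T : List ℤ) (h : T ≠ []) : dbl (x :: T) = x * dbl T - dml T := by
  have h1 : (x :: T) ≠ [] := by simp
  rw [dbl_eq_dropLast _ h1, List.dropLast_cons_of_ne_nil h, disc_cons,
    dbl_eq_dropLast _ h, dml]

lemma dbl_singleton (x : ℤ) : dbl [x] = 1 := by
  rw [dbl_eq_dropLast _ (by simp)]; rfl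

lemma dml_cons (x : ℤ) (T : List ℤ) (h : T ≠ []) : dml (x :: T) = dbl T := by
  rw [dml, List.dropLast_cons_of_ne_nil h, dtl_cons, dbl_eq_dropLast _ h]

lemma dml_singleton (x : ℤ) : dml [x] = 0 := rfl
lemma dml_nil : dml [] = 0 := rfl

/-- basic bounds for lists with entries ≥ 2 (possibly empty). -/
lemma dtl_bounds (L : List ℤ) (h : ∀ x ∈ L, 2 ≤ x) : 0 ≤ dtl L ∧ dtl L < disc L := by
  induction L with
  | nil => simp [dtl_nil, disc_nil]
  | cons a T ih =>
    have hT := ih (fun x hx => h x (List.mem_cons_of_mem _ hx))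
    have ha : 2 ≤ a := h a List.mem_cons_self
    rw [dtl_cons, disc_cons]
    constructor
    · linarith [hT.1, hT.2]
    · nlinarith [hT.1, hT.2]

lemma disc_pos (L : List ℤ) (h : ∀ x ∈ L, 2 ≤ x) : 1 ≤ disc L := by
  have := dtl_bounds L h
  linarith [this.1, this.2]

lemma dbl_bounds (L : List ℤ) (h : ∀ x ∈ L, 2 ≤ x) : 0 ≤ dbl L ∧ dbl L < disc L := by
  have := dtl_bounds L.reverse (fun x hx => h x (List.mem_reverse.mp hx))
  rwa [disc_reverse] at this

lemma admissible_reverse {L : List ℤ} (h : Admissible L) : Admissible L.reverse :=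
  ⟨fun hc => h.1 (by simpa using congrArg List.reverse hc),
   fun x hx => h.2 x (List.mem_reverse.mp hx)⟩

lemma dtl_one_le {L : List ℤ} (h : Admissible L) : 1 ≤ dtl L := by
  obtain ⟨a, T, rfl⟩ : ∃ a T, L = a :: T := by
    cases L with
    | nil => exact absurd rfl h.1
    | cons a T => exact ⟨a, T, rfl⟩
  rw [dtl_cons]
  exact disc_pos T (fun x hx => h.2 x (List.mem_cons_of_mem _ hx))

lemma dbl_one_le {L : List ℤ} (h : Admissible L) : 1 ≤ dbl L :=
  dtl_one_le (admissible_reverse h)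

lemma disc_ge_two {L : List ℤ} (h : Admissible L) : 2 ≤ disc L := by
  have h1 := dtl_one_le h
  have h2 := (dtl_bounds L h.2).2
  linarith

/-- the continued-fraction determinant identity. -/
lemma identI (L : List ℤ) (h : L ≠ []) : dtl L * dbl L = disc L * dml L + 1 := by
  induction L with
  | nil => exact absurd rfl h
  | cons x T ih =>
    cases T with
    | nil => simp [dtl_cons, dbl_singleton, dml_singleton, disc_nil, disc_singleton]
    | cons t T2 =>
      have hT : (t :: T2) ≠ [] := by simp
      have := ih hT
      rw [disc_cons x (t :: T2), dtl_cons, dbl_cons x _ hT, dml_cons x _ hT]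
      linear_combination this
/-- An admissible chain is determined by `(disc, dtl)`. -/
lemma disc_dtl_inj : ∀ X : List ℤ, Admissible X → ∀ Y : List ℤ, Admissible Y →
    disc X = disc Y → dtl X = dtl Y → X = Y := by
  intro X
  induction X with
  | nil => intro h; exact absurd rfl h.1
  | cons x T ih =>
    intro hX Y hY hd ht
    obtain ⟨y, S, rfl⟩ : ∃ y S, Y = y :: S := by
      cases Y with
      | nil => exact absurd rfl hY.1
      | cons y S => exact ⟨y, S, rfl⟩
    have hTm : ∀ z ∈ T, 2 ≤ z := fun z hz => hX.2 z (List.mem_cons_of_mem _ hz)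
    have hSm : ∀ z ∈ S, 2 ≤ z := fun z hz => hY.2 z (List.mem_cons_of_mem _ hz)
    rw [dtl_cons, dtl_cons] at ht
    rw [disc_cons, disc_cons, ht] at hd
    have hTb := dtl_bounds T hTm
    have hSb := dtl_bounds S hSm
    have hDpos : 1 ≤ disc S := disc_pos S hSm
    have hxy : x = y := by
      rcases lt_trichotomy x y with hl | he | hl
      · exfalso
        have : x + 1 ≤ y := hl
        nlinarith [hTb.1, hTb.2, hSb.1, hSb.2, ht]
      · exact he
      · exfalso
        have : y + 1 ≤ x := hl
        nlinarith [hTb.1, hTb.2, hSb.1, hSb.2, ht]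
    subst hxy
    have htt : dtl T = dtl S := by
      have := hd
      rw [ht] at hTb
      nlinarith [this]
    have hTS : T = S := by
      cases T with
      | nil =>
        cases S with
        | nil => rfl
        | cons s S2 =>
          exfalso
          have : 2 ≤ disc (s :: S2) := disc_ge_two ⟨by simp, hSm⟩
          rw [← ht] at this
          simp [disc_nil] at this
      | cons t T2 =>
        cases S with
        | nil =>
          exfalso
          have : 2 ≤ disc (t :: T2) := disc_ge_two ⟨by simp, hTm⟩
          rw [ht] at this
          simp [disc_nil] at this
        | cons s S2 =>
          exact ih ⟨by simp, hTm⟩ _ ⟨by simp, hSm⟩ ht htt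
    rw [hTS]
lemma decLast_concat (X : List ℤ) (a : ℤ) : decLast (X ++ [a]) = X ++ [a - 1] := by
  rw [decLast, List.reverse_append]
  simp [decHead]

lemma decLast_nil : decLast [] = [] := rfl

/-- locating the `1` used in a blow-down. -/
lemma decomp_cases : ∀ (A : List ℤ) {P S T : List ℤ}, P ++ 1 :: S = A ++ 1 :: T →
    (1 : ℤ) ∉ A → (P = A ∧ S = T) ∨ (∃ Q, P = A ++ 1 :: Q ∧ T = Q ++ 1 :: S) := by
  intro A
  induction A with
  | nil =>
    intro P S T heq _
    cases P with
    | nil => left; simpa using heq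
    | cons p P2 =>
      right
      simp only [List.nil_append, List.cons_append, List.cons.injEq] at heq
      exact ⟨P2, by simp [heq.1], heq.2.symm⟩
  | cons a A2 ih =>
    intro P S T heq hmem
    have ha : a ≠ 1 := fun hc => hmem (by simp [hc])
    cases P with
    | nil =>
      exfalso
      simp only [List.nil_append, List.cons_append, List.cons.injEq] at heq
      exact ha heq.1.symm
    | cons p P2 =>
      simp only [List.cons_append, List.cons.injEq] at heq
      have hm2 : (1:ℤ) ∉ A2 := fun hc => hmem (List.mem_cons_of_mem _ hc)
      rcases ih heq.2 hm2 with ⟨h1, h2⟩ | ⟨Q, h1, h2⟩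
      · left; exact ⟨by rw [heq.1, h1], h2⟩
      · right; exact ⟨Q, by rw [heq.1, h1]; rfl, h2⟩

lemma not_one_mem_of_admissible {L : List ℤ} (h : ∀ x ∈ L, 2 ≤ x) : (1:ℤ) ∉ L := by
  intro hc
  have := h 1 hc
  omega

/-- a list without any entry `1` admits no blow-down. -/
lemma shrinks_eq_of_no_one {L N : List ℤ} (h1 : (1:ℤ) ∉ L) (h : Shrinks L N) : N = L := by
  rcases Relation.ReflTransGen.cases_head h with heq | ⟨M, ⟨P, S, hPS, _⟩, _⟩
  · exact heq.symm
  · exact absurd (by rw [hPS]; simp : (1:ℤ) ∈ L) h1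

lemma mem_decHead_le {S : List ℤ} {x : ℤ} (hx : x ∈ S) : ∃ y ∈ decHead S, y ≤ x := by
  cases S with
  | nil => simp at hx
  | cons s T =>
    rcases List.mem_cons.mp hx with rfl | hT
    · exact ⟨x - 1, by simp [decHead], by omega⟩
    · exact ⟨x, by simp [decHead, hT], le_refl x⟩

lemma mem_decLast_le {P : List ℤ} {x : ℤ} (hx : x ∈ P) : ∃ y ∈ decLast P, y ≤ x := by
  have : x ∈ P.reverse := List.mem_reverse.mpr hx
  obtain ⟨y, hy, hle⟩ := mem_decHead_le this
  exact ⟨y, by rw [decLast]; exact List.mem_reverse.mpr hy, hle⟩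

/-- a nonpositive entry persists under shrinking. -/
lemma shrinks_nonpos {L N : List ℤ} (h : Shrinks L N) :
    ∀ x ∈ L, x ≤ 0 → ∃ y ∈ N, y ≤ 0 := by
  induction h using Relation.ReflTransGen.head_induction_on with
  | refl => intro x hx hx0; exact ⟨x, hx, hx0⟩
  | head hstep _ ih =>
    intro x hx hx0
    obtain ⟨P, S, hPS, hM⟩ := hstep
    rw [hPS] at hx
    rcases List.mem_append.mp hx with hP | hS
    · obtain ⟨y, hy, hle⟩ := mem_decLast_le hP
      exact ih y (by rw [hM]; exact List.mem_append.mpr (Or.inl hy)) (by omega)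
    · rcases List.mem_cons.mp hS with rfl | hS2
      · omega
      · obtain ⟨y, hy, hle⟩ := mem_decHead_le hS2
        exact ih y (by rw [hM]; exact List.mem_append.mpr (Or.inr hy)) (by omega)

lemma not_shrinks_of_nonpos {L : List ℤ} {c : ℤ} (hc : 1 ≤ c)
    (hx : ∃ x ∈ L, x ≤ 0) (h : Shrinks L [c, 1]) : False := by
  obtain ⟨x, hxL, hx0⟩ := hx
  obtain ⟨y, hy, hy0⟩ := shrinks_nonpos h x hxL hx0
  rcases List.mem_cons.mp hy with rfl | hy2
  · omega
  · rcases List.mem_cons.mp hy2 with rfl | hy3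
    · omega
    · simp at hy3
lemma no_shrink_from_nil {c : ℤ} (h : Shrinks [] [c, 1]) : False := by
  have := shrinks_eq_of_no_one (by simp) h
  simp at this

/-- dead-end lemma: `[h, X]` with `X` entries ≥ 2 never shrinks to `[c,1]`. -/
lemma lemD : ∀ (X : List ℤ), (∀ x ∈ X, 2 ≤ x) → ∀ (h c : ℤ), 1 ≤ c →
    Shrinks (h :: X) [c, 1] → False := by
  intro X
  induction X with
  | nil =>
    intro _ h c hc hsh
    rcases lt_trichotomy h 1 with hl | he | hl
    · exact not_shrinks_of_nonpos hc ⟨h, by simp, by omega⟩ hsh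
    · subst he
      rcases Relation.ReflTransGen.cases_head hsh with heq | ⟨M, ⟨P, S, hPS, hM⟩, htail⟩
      · simp at heq
      · rcases decomp_cases [] hPS.symm (by simp) with ⟨hP, hS⟩ | ⟨Q, _, hQ⟩
        · subst hP; subst hS
          rw [decLast_nil] at hM
          simp only [decHead, List.nil_append] at hM
          subst hM
          exact no_shrink_from_nil htail
        · simp at hQ
    · have h1 : (1:ℤ) ∉ [h] := by intro hm; simp at hm; omega
      have := shrinks_eq_of_no_one h1 hsh
      simp at this
  | cons x T ih =>
    intro hX h c hc hsh
    rcases lt_trichotomy h 1 with hl | he | hl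
    · exact not_shrinks_of_nonpos hc ⟨h, by simp, by omega⟩ hsh
    · subst he
      rcases Relation.ReflTransGen.cases_head hsh with heq | ⟨M, ⟨P, S, hPS, hM⟩, htail⟩
      · have : x = 1 ∧ T = [] := by
          have := heq
          simp only [List.cons.injEq] at this
          exact ⟨this.2.1, this.2.2⟩
        have hx2 := hX x (by simp)
        omega
      · rcases decomp_cases [] hPS.symm (by simp) with ⟨hP, hS⟩ | ⟨Q, _, hQ⟩
        · subst hP; subst hS
          rw [decLast_nil] at hM
          simp only [decHead, List.nil_append] at hM
          subst hM
          exact ih (fun z hz => hX z (List.mem_cons_of_mem _ hz)) (x - 1) c hc htail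
        · rw [hQ] at hX
          have := hX 1 (by simp)
          omega
    · have hx2 := hX x (by simp)
      have h1 : (1:ℤ) ∉ h :: x :: T := by
        simp only [List.mem_cons, not_or]
        refine ⟨by omega, by omega, ?_⟩
        intro hc1
        have := hX 1 (List.mem_cons_of_mem _ hc1)
        omega
      have heq2 := shrinks_eq_of_no_one h1 hsh
      simp only [List.cons.injEq] at heq2
      omega

/-- characterization of `X ++ [1]` shrinking to `[c,1]`. -/
lemma lemE : ∀ (X : List ℤ), X ≠ [] → (∀ x ∈ X, 2 ≤ x) → ∀ c : ℤ, 1 ≤ c →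
    Shrinks (X ++ [1]) [c, 1] → 2 ≤ c ∧ ∃ k : ℕ, X = c :: TW k := by
  intro X
  induction X using List.reverseRecOn with
  | nil => intro h; exact absurd rfl h
  | append_singleton Y y ih =>
    intro _ hX c hc hsh
    have hy : 2 ≤ y := hX y (by simp)
    have hYm : ∀ z ∈ Y, 2 ≤ z := fun z hz => hX z (by simp [hz])
    rcases Relation.ReflTransGen.cases_head hsh with heq | ⟨M, ⟨P, S, hPS, hM⟩, htail⟩
    · cases Y with
      | nil =>
        simp only [List.nil_append, List.cons_append, List.cons.injEq] at heq
        refine ⟨by omega, 0, ?_⟩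
        rw [heq.1]; rfl
      | cons a Y2 =>
        exfalso
        have hlen := congrArg List.length heq
        simp only [List.length_append, List.length_cons, List.length_nil] at hlen
        omega
    · have hPS' : P ++ 1 :: S = (Y ++ [y]) ++ 1 :: ([] : List ℤ) := by
        rw [← hPS]
      have h1m : (1:ℤ) ∉ Y ++ [y] := by
        simp only [List.mem_append, List.mem_singleton, not_or]
        exact ⟨fun hc1 => by have := hYm 1 hc1; omega, by omega⟩
      rcases decomp_cases (Y ++ [y]) hPS' h1m with ⟨hP, hS⟩ | ⟨Q, _, hQ⟩
      · subst hP; subst hS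
        rw [decLast_concat] at hM
        simp only [decHead, List.append_nil] at hM
        subst hM
        by_cases hy3 : 3 ≤ y
        · exfalso
          have h1m' : (1:ℤ) ∉ Y ++ [y - 1] := by
            simp only [List.mem_append, List.mem_singleton, not_or]
            exact ⟨fun hc1 => by have := hYm 1 hc1; omega, by omega⟩
          have heq2 := shrinks_eq_of_no_one h1m' htail
          have : (1:ℤ) ∈ Y ++ [y-1] := by rw [← heq2]; simp
          rcases List.mem_append.mp this with h | h
          · have := hYm 1 h; omega
          · simp at h; omega
        · have hy2 : y = 2 := by omega
          subst hy2
          cases Y with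
          | nil =>
            exfalso
            simp only [List.nil_append] at htail
            rcases Relation.ReflTransGen.cases_head htail with heq2 | ⟨M2, ⟨P2, S2, hPS2, hM2⟩, htail2⟩
            · simp at heq2
            · rcases decomp_cases [] hPS2.symm (by simp) with ⟨hP2, hS2⟩ | ⟨Q2, _, hQ2⟩
              · subst hP2; subst hS2
                rw [decLast_nil] at hM2
                simp only [decHead, List.nil_append] at hM2
                subst hM2
                exact no_shrink_from_nil htail2
              · simp at hQ2
          | cons a Y2 =>
            obtain ⟨hc2, k, hk⟩ := ih (by simp) (fun z hz => hYm z hz) c hc htail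
            refine ⟨hc2, k + 1, ?_⟩
            rw [hk]
            show (c :: TW k) ++ [2] = c :: TW (k+1)
            rw [TW, TW, List.replicate_succ']
            rfl
      · exfalso
        simp at hQ
lemma TW_zero : TW 0 = [] := rfl
lemma TW_succ (n : ℕ) : TW (n+1) = 2 :: TW n := rfl
lemma TW_succ' (n : ℕ) : TW (n+1) = TW n ++ [2] := by
  rw [TW, TW, List.replicate_succ']

lemma mem_TW {x : ℤ} {n : ℕ} (h : x ∈ TW n) : x = 2 := List.eq_of_mem_replicate h

lemma getLast!_concat' (X : List ℤ) (a : ℤ) : (X ++ [a]).getLast! = a := by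
  exact List.getLast!_of_getLast? List.getLast?_concat

lemma sprod_concat (X : List ℤ) (a : ℤ) (Y : List ℤ) :
    sprod (X ++ [a]) Y = X ++ (a + Y.head! - 1) :: Y.tail := by
  rw [sprod, List.dropLast_concat, getLast!_concat']

lemma sprod_zero (c y : ℤ) (T : List ℤ) : sprod (c :: TW 0) (y :: T) = (c + y - 1) :: T := by
  have : (c :: TW 0) = [] ++ [c] := rfl
  rw [this, sprod_concat]
  rfl

lemma sprod_succ (c y : ℤ) (m : ℕ) (T : List ℤ) :
    sprod (c :: TW (m+1)) (y :: T) = c :: (TW m ++ (y + 1) :: T) := by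
  have h1 : (c :: TW (m+1)) = (c :: TW m) ++ [2] := by rw [TW_succ']; rfl
  rw [h1, sprod_concat]
  have : (2 : ℤ) + (y :: T).head! - 1 = y + 1 := by
    show (2:ℤ) + y - 1 = y + 1
    ring
  rw [this]
  rfl

lemma disc_TWcons : ∀ (n : ℕ) (y : ℤ) (T : List ℤ),
    disc (TW n ++ (y+1) :: T) = (n+1) * disc (y :: T) + disc T ∧
    dtl (TW n ++ (y+1) :: T) = n * disc (y :: T) + disc T := by
  intro n
  induction n with
  | zero =>
    intro y T
    simp only [TW_zero, List.nil_append]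
    rw [disc_cons, disc_cons, dtl_cons]
    push_cast
    constructor <;> ring
  | succ m ih =>
    intro y T
    obtain ⟨ih1, ih2⟩ := ih y T
    rw [TW_succ]
    have h1 : (2:ℤ) :: TW m ++ (y+1) :: T = 2 :: (TW m ++ (y+1) :: T) := rfl
    rw [h1, disc_cons, dtl_cons, ih1, dtl_eq_tail _ (by simp : TW m ++ (y+1)::T ≠ []), 
      ← dtl_eq_tail _ (by simp : TW m ++ (y+1)::T ≠ []), ih2]
    constructor <;> (push_cast; ring)
  
lemma disc_sprod_cTW (n : ℕ) (c y : ℤ) (T : List ℤ) :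
    disc (sprod (c :: TW n) (y :: T)) = (1 + n*(c-1)) * disc (y :: T) + (c-1) * disc T := by
  cases n with
  | zero =>
    rw [sprod_zero, disc_cons, disc_cons]
    push_cast
    ring
  | succ m =>
    rw [sprod_succ, disc_cons, dtl_eq_tail _ (by simp)]
    have h2 : (TW m ++ (y+1) :: T).tail = (TW m ++ (y+1) :: T).tail := rfl
    obtain ⟨ih1, ih2⟩ := disc_TWcons m y T
    rw [← dtl_eq_tail _ (by simp), ih1, ih2]
    push_cast
    ring
lemma disc_TW (n : ℕ) : disc (TW n) = n + 1 ∧ dtl (TW n) = n := by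
  induction n with
  | zero => simp [TW_zero, disc_nil, dtl_nil]
  | succ m ih =>
    rw [TW_succ, disc_cons, dtl_cons, ih.1]
    constructor
    · rw [show dtl (TW m) = (m:ℤ) from ih.2]; push_cast; ring
    · push_cast; ring

lemma disc_cTW (c : ℤ) (n : ℕ) : disc (c :: TW n) = c * (n+1) - n := by
  rw [disc_cons, (disc_TW n).1, show dtl (TW n) = (n:ℤ) from (disc_TW n).2]

lemma dbl_cTW (c : ℤ) (n : ℕ) : dbl (c :: TW n) = c * n - n + 1 := by
  cases n with
  | zero => rw [TW_zero, dbl_singleton]; push_cast; ring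
  | succ m =>
    have h1 : (c :: TW (m+1)) = (c :: TW m) ++ [2] := by rw [TW_succ']; rfl
    rw [h1, dbl_concat, disc_cTW]
    push_cast; ring

lemma dbl_sprod_cTW (n : ℕ) (c y : ℤ) (T : List ℤ) :
    dbl (sprod (c :: TW n) (y :: T)) = (1 + n*(c-1)) * dbl (y :: T) + (c-1) * dml (y :: T) := by
  cases T with
  | nil =>
    cases n with
    | zero =>
      rw [sprod_zero, dbl_singleton, dbl_singleton, dml_singleton]
      push_cast; ring
    | succ m =>
      have h1 : sprod (c :: TW (m+1)) [y] = (c :: TW m) ++ [(y+1)] := by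
        rw [sprod_succ]
        rfl
      rw [h1, dbl_concat, disc_cTW, dbl_singleton, dml_singleton]
      push_cast; ring
  | cons t T2 =>
    have hds : (sprod (c :: TW n) (y :: t :: T2)).dropLast
        = sprod (c :: TW n) (y :: (t :: T2).dropLast) := by
      cases n with
      | zero =>
        rw [sprod_zero, sprod_zero]
        exact List.dropLast_cons_of_ne_nil (by simp)
      | succ m =>
        rw [sprod_succ, sprod_succ, List.dropLast_cons_of_ne_nil (by simp),
          List.dropLast_append_cons, List.dropLast_cons₂]
    have hne : sprod (c :: TW n) (y :: t :: T2) ≠ [] := by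
      cases n with
      | zero => rw [sprod_zero]; simp
      | succ m => rw [sprod_succ]; simp
    rw [dbl_eq_dropLast _ hne, hds, disc_sprod_cTW]
    have h2 : dbl (y :: t :: T2) = disc (y :: (t :: T2).dropLast) := by
      rw [dbl_eq_dropLast _ (by simp), List.dropLast_cons_of_ne_nil (by simp)]
    have h3 : dml (y :: t :: T2) = disc ((t :: T2).dropLast) := by
      rw [dml, List.dropLast_cons_of_ne_nil (by simp), dtl_cons]
    rw [h2, h3]

lemma length_sprod_cTW (n : ℕ) (c y : ℤ) (T : List ℤ) :
    (sprod (c :: TW n) (y :: T)).length = n + 1 + T.length := by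
  cases n with
  | zero => rw [sprod_zero]; simp only [List.length_cons]; omega
  | succ m =>
    rw [sprod_succ]
    simp [TW, List.length_replicate]
    omega

lemma admissible_sprod_cTW {n : ℕ} {c y : ℤ} {T : List ℤ} (hc : 2 ≤ c) (hy : 2 ≤ y)
    (hT : ∀ x ∈ T, 2 ≤ x) : Admissible (sprod (c :: TW n) (y :: T)) := by
  cases n with
  | zero =>
    rw [sprod_zero]
    refine ⟨by simp, ?_⟩
    intro x hx
    rcases List.mem_cons.mp hx with rfl | hx2
    · omega
    · exact hT x hx2
  | succ m =>
    rw [sprod_succ]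
    refine ⟨by simp, ?_⟩
    intro x hx
    rcases List.mem_cons.mp hx with rfl | hx2
    · omega
    · rcases List.mem_append.mp hx2 with h | h
      · rw [mem_TW h]
      · rcases List.mem_cons.mp h with rfl | h3
        · omega
        · exact hT x h3

lemma sprod_one (y : ℤ) (T : List ℤ) : sprod ((1:ℤ) :: TW 0) (y :: T) = y :: T := by
  rw [sprod_zero]
  norm_num
lemma main_num : ∀ (N : ℕ) (A B : List ℤ) (c : ℤ), A.length + B.length ≤ N →
    Admissible A → Admissible B → 1 ≤ c → Shrinks (A ++ 1 :: B) [c, 1] →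
    ∃ n : ℕ, disc A = (1 + n * (c-1)) * disc B + (c-1) * (disc B - dbl B) ∧
      dbl A = (1 + n * (c-1)) * (disc B - dtl B) + (c-1) * (disc B - dtl B - dbl B + dml B) ∧
      (c = 1 → n = 0) := by
  intro N
  induction N with
  | zero =>
    intro A B c hlen hA
    exfalso
    have : A = [] := List.length_eq_zero_iff.mp (by omega)
    exact hA.1 this
  | succ N ih =>
    intro A B c hlen hA hB hc hsh
    obtain ⟨b, Bt, rfl⟩ : ∃ b Bt, B = b :: Bt := by
      cases B with
      | nil => exact absurd rfl hB.1
      | cons b Bt => exact ⟨b, Bt, rfl⟩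
    rcases List.eq_nil_or_concat A with rfl | ⟨Ad, a, hAe⟩
    · exact absurd rfl hA.1
    rw [List.concat_eq_append] at hAe
    subst hAe
    have ha : 2 ≤ a := hA.2 a (by simp)
    have hAdm : ∀ x ∈ Ad, 2 ≤ x := fun x hx => hA.2 x (by simp [hx])
    have hb : 2 ≤ b := hB.2 b (by simp)
    have hBtm : ∀ x ∈ Bt, 2 ≤ x := fun x hx => hB.2 x (by simp [hx])
    have h1A : (1:ℤ) ∉ Ad ++ [a] := by
      simp only [List.mem_append, List.mem_singleton, not_or]
      exact ⟨fun hc1 => by have := hAdm 1 hc1; omega, by omega⟩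
    rcases Relation.ReflTransGen.cases_head hsh with heq | ⟨M, ⟨P, S, hPS, hM⟩, htail⟩
    · exfalso
      have hlen2 := congrArg List.length heq
      simp only [List.length_append, List.length_cons, List.length_nil] at hlen2
      omega
    rcases decomp_cases (Ad ++ [a]) hPS.symm h1A with ⟨hP, hS⟩ | ⟨Q, _, hQ⟩
    swap
    · exfalso
      have : (1:ℤ) ∈ b :: Bt := by rw [hQ]; simp
      rcases List.mem_cons.mp this with h1 | h1
      · omega
      · have := hBtm 1 h1; omega
    subst hP; subst hS
    rw [decLast_concat] at hM
    have hdh : decHead (b :: Bt) = (b - 1) :: Bt := rfl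
    rw [hdh] at hM
    subst hM
    by_cases ha2 : a = 2
    · by_cases hb2 : b = 2
      · -- case 4 : a = 2, b = 2
        subst ha2; subst hb2
        rcases Relation.ReflTransGen.cases_head htail with heq2 | ⟨M2, ⟨P2, S2, hPS2, hM2⟩, htail2⟩
        · have hlen2 := congrArg List.length heq2
          simp only [List.length_append, List.length_cons, List.length_nil] at hlen2
          have hAdnil : Ad = [] := List.length_eq_zero_iff.mp (by omega)
          have hBtnil : Bt = [] := List.length_eq_zero_iff.mp (by omega)
          subst hAdnil; subst hBtnil
          norm_num at heq2
          obtain ⟨hc1, -⟩ := heq2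
          refine ⟨0, ?_, ?_, fun _ => rfl⟩
          · simp only [List.nil_append, disc_singleton, disc_cons, dtl_cons, disc_nil, dtl_nil,
              dbl_singleton, dml_singleton]
            norm_num
          · simp only [List.nil_append, dbl_singleton, disc_cons, dtl_cons, disc_nil, dtl_nil,
              dml_singleton]
            norm_num
        · exfalso
          have hPS2' : P2 ++ 1 :: S2 = Ad ++ 1 :: (1 :: Bt) := by
            rw [← hPS2]; norm_num
          have h1Ad : (1:ℤ) ∉ Ad := fun hmem => by have := hAdm 1 hmem; omega
          rcases decomp_cases Ad hPS2' h1Ad with ⟨hP2, hS2⟩ | ⟨Q, hPQ, hTQ⟩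
          · subst hP2; subst hS2
            refine not_shrinks_of_nonpos hc ⟨0, ?_, le_rfl⟩ htail2
            rw [hM2]
            simp [decHead]
          · cases Q with
            | nil =>
              have hS2' : Bt = S2 := by simpa using hTQ
              refine not_shrinks_of_nonpos hc ⟨0, ?_, le_rfl⟩ htail2
              rw [hM2, hPQ, ← hS2']
              have : decLast (Ad ++ 1 :: ([]:List ℤ)) = Ad ++ [0] := by
                rw [show Ad ++ 1 :: ([]:List ℤ) = Ad ++ [1] from rfl, decLast_concat]
                norm_num
              rw [this]
              simp
            | cons q Q2 =>
              simp only [List.cons_append, List.cons.injEq] at hTQ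
              have : (1:ℤ) ∈ Bt := by rw [hTQ.2]; simp
              have := hBtm 1 this; omega
      · -- case 2 : a = 2, b ≥ 3
        subst ha2
        have hM2 : (Ad ++ [(2:ℤ)-1]) ++ (b-1) :: Bt = Ad ++ 1 :: ((b-1) :: Bt) := by
          norm_num
        rw [hM2] at htail
        have hBt' : Admissible ((b-1) :: Bt) := by
          refine ⟨by simp, ?_⟩
          intro x hx
          rcases List.mem_cons.mp hx with rfl | h
          · omega
          · exact hBtm x h
        cases Ad with
        | nil => exact absurd htail (fun ht => lemD ((b-1)::Bt) hBt'.2 1 c hc (by simpa [Shrinks] using ht))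
        | cons a0 Ad2 =>
          obtain ⟨n, e1, e2, e3⟩ := ih (a0 :: Ad2) ((b-1) :: Bt) c
            (by simp only [List.length_append, List.length_cons, List.length_nil] at hlen ⊢; omega)
            ⟨by simp, hAdm⟩ hBt' hc htail
          refine ⟨n, ?_, ?_, e3⟩
          · cases Bt with
            | nil =>
              simp only [disc_concat, dbl_concat, disc_cons, dtl_cons, disc_nil, dtl_nil,
                dbl_singleton, dml_singleton] at e1 e2 ⊢
              linear_combination 2*e1 - e2
            | cons t Bt2 =>
              simp only [disc_concat, dbl_concat, disc_cons, dtl_cons, dbl_cons, dml_cons,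
                ne_eq, reduceCtorEq, not_false_eq_true] at e1 e2 ⊢
              linear_combination 2*e1 - e2
          · cases Bt with
            | nil =>
              simp only [disc_concat, dbl_concat, disc_cons, dtl_cons, disc_nil, dtl_nil,
                dbl_singleton, dml_singleton] at e1 ⊢
              linear_combination e1
            | cons t Bt2 =>
              simp only [disc_concat, dbl_concat, disc_cons, dtl_cons, dbl_cons, dml_cons,
                ne_eq, reduceCtorEq, not_false_eq_true] at e1 ⊢
              linear_combination e1
    · by_cases hb2 : b = 2
      · -- case 3 : a ≥ 3, b = 2
        subst hb2
        have ha3 : 3 ≤ a := by omega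
        have hM2 : (Ad ++ [a-1]) ++ ((2:ℤ)-1) :: Bt = (Ad ++ [a-1]) ++ 1 :: Bt := by norm_num
        rw [hM2] at htail
        have hAdm' : ∀ x ∈ Ad ++ [a-1], 2 ≤ x := by
          intro x hx
          rcases List.mem_append.mp hx with h | h
          · exact hAdm x h
          · simp at h; omega
        cases Bt with
        | nil =>
          obtain ⟨hc2, k, hk⟩ := lemE (Ad ++ [a-1]) (by simp) hAdm' c hc (by simpa [Shrinks] using htail)
          cases k with
          | zero =>
            have hAd : Ad = [] ∧ a - 1 = c := by
              cases Ad with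
              | nil => exact ⟨rfl, (by simpa using (hk : [a-1] = c :: TW 0) : a - 1 = c ∧ TW 0 = []).1⟩
              | cons z zs =>
                exfalso
                have := congrArg List.length hk
                simp [TW] at this
            obtain ⟨rfl, hac⟩ := hAd
            refine ⟨0, ?_, ?_, fun h1 => rfl⟩
            · simp only [List.nil_append, disc_singleton, disc_cons, dtl_cons, disc_nil, dtl_nil,
                dbl_singleton, dml_singleton]
              push_cast
              linarith [hac]
            · simp only [List.nil_append, dbl_singleton, disc_cons, dtl_cons, disc_nil, dtl_nil,
                dml_singleton]
              push_cast; ring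
          | succ k' =>
            have hk2 : Ad ++ [a-1] = (c :: TW k') ++ [2] := by
              rw [hk, TW_succ']; rfl
            obtain ⟨hAd, ha1⟩ := List.append_inj' hk2 (by simp)
            have haa : a = 3 := by
              simp only [List.cons.injEq] at ha1
              omega
            subst haa
            refine ⟨k' + 1, ?_, ?_, fun h1 => by omega⟩
            · rw [hAd, disc_concat, disc_cTW, dbl_cTW]
              simp only [disc_cons, dtl_cons, disc_nil, dtl_nil, dbl_singleton, dml_singleton]
              push_cast; ring
            · rw [hAd, dbl_concat, disc_cTW]
              simp only [disc_cons, dtl_cons, disc_nil, dtl_nil, dbl_singleton, dml_singleton]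
              push_cast; ring
        | cons t Bt2 =>
          obtain ⟨n, e1, e2, e3⟩ := ih (Ad ++ [a-1]) (t :: Bt2) c
            (by simp only [List.length_append, List.length_cons, List.length_nil] at hlen ⊢; omega)
            ⟨by simp, hAdm'⟩ ⟨by simp, fun x hx => hBtm x hx⟩ hc htail
          refine ⟨n, ?_, ?_, e3⟩
          · simp only [disc_concat, dbl_concat, disc_cons, dtl_cons, dbl_cons, dml_cons,
              ne_eq, reduceCtorEq, not_false_eq_true] at e1 e2 ⊢
            linear_combination e1 + e2
          · simp only [disc_concat, dbl_concat, disc_cons, dtl_cons, dbl_cons, dml_cons,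
              ne_eq, reduceCtorEq, not_false_eq_true] at e2 ⊢
            linear_combination e2
      · -- case 1 : a ≥ 3, b ≥ 3 : dead end
        exfalso
        have h1M : (1:ℤ) ∉ (Ad ++ [a-1]) ++ (b-1) :: Bt := by
          intro hmem
          rcases List.mem_append.mp hmem with h1 | h1
          · rcases List.mem_append.mp h1 with h2 | h2
            · have := hAdm 1 h2; omega
            · simp at h2; omega
          · rcases List.mem_cons.mp h1 with h2 | h2
            · omega
            · have := hBtm 1 h2; omega
        have heq2 := shrinks_eq_of_no_one h1M htail
        have : (1:ℤ) ∈ (Ad ++ [a-1]) ++ (b-1) :: Bt := by rw [← heq2]; simp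
        exact h1M this
/-- Lemma 2.5 (i): let `A`, `B` be admissible linear chains, `c` a positive integer
and `B' = B*`. If `[A,1,B]` shrinks to `[c,1]`, then `n := r(A) − r(B*) ≥ 0` and
`A = [c, TWₙ] ∗ B*`; moreover `n = 0` if `c = 1`. -/
theorem shrinks_to_c_one (A B B' : List ℤ) (c : ℤ) (hc : 0 < c)
    (hA : Admissible A) (hB : Admissible B) (hB' : Admissible B')
    (hadj : inductance B' = 1 - inductance B.reverse)
    (h : Shrinks (A ++ 1 :: B) [c, 1]) :
    B'.length ≤ A.length ∧
    A = sprod (c :: TW (A.length - B'.length)) B' ∧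
    (c = 1 → A.length = B'.length) := by
  have hc1 : 1 ≤ c := hc
  obtain ⟨n, hα, hα'', hn0⟩ := main_num (A.length + B.length) A B c le_rfl hA hB hc1 h
  obtain ⟨b', Bt', rfl⟩ : ∃ b' T, B' = b' :: T := by
    cases B' with
    | nil => exact absurd rfl hB'.1
    | cons b' T => exact ⟨b', T, rfl⟩
  have hβpos : (0:ℤ) < disc B := by linarith [disc_ge_two hB]
  have hβ'pos : (0:ℤ) < disc (b' :: Bt') := by linarith [disc_ge_two hB']
  -- Part III : translate the adjoint condition
  have hnum : disc (B.reverse.tail) = dbl B := by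
    rcases List.eq_nil_or_concat B with rfl | ⟨Bd, bl, hBe⟩
    · exact absurd rfl hB.1
    · rw [List.concat_eq_append] at hBe; subst hBe
      rw [dbl_concat]
      have hrt : (Bd ++ [bl]).reverse.tail = Bd.reverse := by simp
      rw [hrt, disc_reverse]
  have e_rev : inductance B.reverse = (dbl B : ℚ) / (disc B : ℚ) := by
    rw [inductance, disc_reverse, hnum]
  have hq : (dtl (b' :: Bt') : ℚ) / (disc (b' :: Bt') : ℚ) = 1 - (dbl B : ℚ)/(disc B : ℚ) := by
    rw [← e_rev, ← hadj, inductance, dtl_eq_tail _ hB'.1]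
  have hqβ : (disc B : ℚ) ≠ 0 := by exact_mod_cast ne_of_gt hβpos
  have hqβ' : (disc (b' :: Bt') : ℚ) ≠ 0 := by exact_mod_cast ne_of_gt hβ'pos
  have key : dtl (b' :: Bt') * disc B = (disc B - dbl B) * disc (b' :: Bt') := by
    field_simp at hq
    rw [mul_comm (disc B - dbl B)]
    exact_mod_cast hq
  have hIB := identI B hB.1
  have hIB' := identI (b' :: Bt') hB'.1
  have cop1 : IsCoprime (disc (b' :: Bt')) (dtl (b' :: Bt')) :=
    ⟨-(dml (b' :: Bt')), dbl (b' :: Bt'), by linear_combination hIB'⟩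
  have cop2 : IsCoprime (disc B) (disc B - dbl B) :=
    ⟨dtl B - dml B, -(dtl B), by linear_combination hIB⟩
  have d1 : disc (b' :: Bt') ∣ disc B := by
    apply cop1.dvd_of_dvd_mul_right
    exact ⟨disc B - dbl B, by linear_combination key⟩
  have d2 : disc B ∣ disc (b' :: Bt') := by
    apply cop2.dvd_of_dvd_mul_right
    exact ⟨dtl (b' :: Bt'), by linear_combination -key⟩
  have hdd : disc (b' :: Bt') = disc B :=
    Int.dvd_antisymm (le_of_lt hβ'pos) (le_of_lt hβpos) d1 d2
  have hdt : dtl (b' :: Bt') = disc B - dbl B := by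
    have hk2 := key
    rw [hdd] at hk2
    exact mul_right_cancel₀ (ne_of_gt hβpos) hk2
  -- u* and v*
  have hub : 1 ≤ dbl (b' :: Bt') := dbl_one_le hB'
  have hub2 : dbl (b' :: Bt') < disc B := by
    have := (dbl_bounds (b' :: Bt') hB'.2).2
    omega
  have hβ'b1 : 1 ≤ dtl B := dtl_one_le hB
  have hβ'b2 : dtl B < disc B := (dtl_bounds B hB.2).2
  rw [hdd, hdt] at hIB'
  have cop3 : IsCoprime (disc B) (dbl B) := ⟨-(dml B), dtl B, by linear_combination hIB⟩
  have hdvd : disc B ∣ (dbl (b' :: Bt') + dtl B) := by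
    apply cop3.dvd_of_dvd_mul_right
    exact ⟨dbl (b' :: Bt') - dml (b' :: Bt') + dml B, by linear_combination hIB - hIB'⟩
  obtain ⟨k, hk⟩ := hdvd
  have hk1 : k = 1 := by nlinarith [hk, hub, hub2, hβ'b1, hβ'b2, hβpos]
  rw [hk1, mul_one] at hk
  have hu : dbl (b' :: Bt') = disc B - dtl B := by omega
  have hv : dml (b' :: Bt') = disc B - dtl B - dbl B + dml B := by
    have h2 : disc B * dml (b' :: Bt') = disc B * (disc B - dtl B - dbl B + dml B) := by
      linear_combination hIB - hIB' + (disc B - dbl B) * hu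
    exact mul_left_cancel₀ (ne_of_gt hβpos) h2
  -- the candidate chain
  have hCd : disc (sprod (c :: TW n) (b' :: Bt')) = disc A := by
    rw [disc_sprod_cTW, hα]
    have h1 : disc Bt' = disc B - dbl B := hdt
    rw [hdd, h1]
  have hCb : dbl (sprod (c :: TW n) (b' :: Bt')) = dbl A := by
    rw [dbl_sprod_cTW, hα'', hu, hv]
  have hCadm : Admissible (sprod (c :: TW n) (b' :: Bt')) := by
    by_cases hc2 : c = 1
    · subst hc2
      rw [hn0 rfl, sprod_one]
      exact hB'
    · exact admissible_sprod_cTW (by omega) (hB'.2 b' (by simp))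
        (fun x hx => hB'.2 x (by simp [hx]))
  have hAC : A = sprod (c :: TW n) (b' :: Bt') := by
    have hrev := disc_dtl_inj A.reverse (admissible_reverse hA)
      (sprod (c :: TW n) (b' :: Bt')).reverse (admissible_reverse hCadm)
      (by rw [disc_reverse, disc_reverse, hCd])
      (by show dbl A = dbl (sprod (c :: TW n) (b' :: Bt')); rw [hCb])
    have := congrArg List.reverse hrev
    simpa using this
  have hlenA : A.length = n + 1 + Bt'.length := by
    rw [hAC]; exact length_sprod_cTW n c b' Bt'
  have hlenB' : (b' :: Bt').length = Bt'.length + 1 := by simp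
  refine ⟨by omega, ?_, fun h1 => by have := hn0 h1; omega⟩
  have hnn : A.length - (b' :: Bt').length = n := by omega
  rw [hnn]
  exact hAC
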